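/- Let R' = F₂[U,V] be the polynomial ring in two variables over F₂ = ℤ/2ℤ, let C be a finitely generated free R'-module with a distinguished basis B, and let n ≥ 1 and l ≥ 1 be integers. Let x_0, x_1, x_2, x_3, x_4 be five pairwise distinct elements of B. Then there is no R'-linear map ∂ : C → C satisfying all of the following conditions: (i) ∂∘∂ = 0; (ii) ∂x_1 − U·x_0 − V^n·x_2 ∈ UV·C; (iii) ∂x_2 − U·x_3 ∈ UV·C; (iv) ∂x_3 − V^l·x_4 ∈ UV·C; (v) ∂x_0 ∈ UV·C; (vi) for every basis element y ∈ B with y ∉ {x_1, x_2, x_3}, the coefficients [∂y : x_0], [∂y : x_1], [∂y : x_2], [∂y : x_3] all lie in the ideal generated by UV. -/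

import Mathlib

open MvPolynomial

/-- The polynomial ring `F₂[U,V]`. -/
abbrev Rpoly : Type := MvPolynomial (Fin 2) (ZMod 2)

/-- The variable `U` of `F₂[U,V]`. -/
noncomputable abbrev Uvar : Rpoly := X 0

/-- The variable `V` of `F₂[U,V]`. -/
noncomputable abbrev Vvar : Rpoly := X 1

set_option maxHeartbeats 2000000 in
/-- Over `R' = F₂[U,V]`, a finitely generated free module `C`
with basis `B` containing five pairwise distinct elements `x_0, …, x_4`, and
integers `n, l ≥ 1`: there is no `R'`-linear map `∂ : C → C` with `∂∘∂ = 0`,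
`∂x_1 ≡ U·x_0 + V^n·x_2`, `∂x_2 ≡ U·x_3`, `∂x_3 ≡ V^l·x_4`, `∂x_0 ≡ 0`
(all congruences mod `UV·C`), and such that for every basis element
`y ∉ {x_1, x_2, x_3}` the coefficients of `x_0, x_1, x_2, x_3` in `∂y` lie in
the ideal `(UV)`. -/
theorem no_differential_C_one_negn_negone_negl
    {ι : Type*} [Fintype ι] {C : Type*} [AddCommGroup C] [Module Rpoly C]
    (b : Module.Basis ι Rpoly C) (n l : ℕ) (hn : 1 ≤ n) (hl : 1 ≤ l)
    (i0 i1 i2 i3 i4 : ι)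
    (hdist : List.Pairwise (· ≠ ·) [i0, i1, i2, i3, i4]) :
    ¬ ∃ del : C →ₗ[Rpoly] C,
      (del ∘ₗ del = 0) ∧
      (∀ j : ι, Uvar * Vvar ∣
        b.repr (del (b i1) - Uvar • b i0 - Vvar ^ n • b i2) j) ∧
      (∀ j : ι, Uvar * Vvar ∣ b.repr (del (b i2) - Uvar • b i3) j) ∧
      (∀ j : ι, Uvar * Vvar ∣ b.repr (del (b i3) - Vvar ^ l • b i4) j) ∧
      (∀ j : ι, Uvar * Vvar ∣ b.repr (del (b i0)) j) ∧
      (∀ y : ι, y ≠ i1 → y ≠ i2 → y ≠ i3 →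
        ∀ k ∈ ({i0, i1, i2, i3} : Set ι), Uvar * Vvar ∣ b.repr (del (b y)) k) := by
  classical
  rintro ⟨f, hf2, h1, h2, h3, h0, h6⟩
  simp only [List.pairwise_cons, List.mem_cons, List.not_mem_nil] at hdist
  obtain ⟨p0, p1, p2, p3, -⟩ := hdist
  have e02 : i0 ≠ i2 := p0 i2 (by tauto)
  have e03 : i0 ≠ i3 := p0 i3 (by tauto)
  have e23 : i2 ≠ i3 := p2 i3 (by tauto)
  have e34 : i3 ≠ i4 := p3 i4 (by tauto)
  set U : Rpoly := Uvar with hU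
  set V : Rpoly := Vvar with hV
  set c : ι → Rpoly := fun j => b.repr (f (b i1)) j with hc
  set g : ι → Rpoly := fun j => b.repr (f (b j)) i3 with hg
  -- the vanishing of ∂² gives the sum identity
  have hsum : ∑ j, c j * g j = 0 := by
    have hw : f (f (b i1)) = 0 := by
      have := congrArg (fun m : C →ₗ[Rpoly] C => m (b i1)) hf2
      simpa using this
    calc ∑ j, c j * g j = b.repr (f (f (b i1))) i3 := by
          conv_rhs => rw [← b.sum_repr (f (b i1))]
          rw [map_sum, map_sum, Finsupp.finset_sum_apply]
          simp [hc, hg, mul_comm]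
      _ = 0 := by rw [hw]; simp
  -- coefficient facts for c
  have hrepr : ∀ i j : ι, b.repr (b i) j = if i = j then 1 else 0 := fun i j =>
    b.repr_self_apply i j
  have hc1 : ∀ j : ι, U * V ∣ c j - U * (if i0 = j then 1 else 0)
      - V ^ n * (if i2 = j then 1 else 0) := by
    intro j
    have := h1 j
    simpa [map_sub, Finsupp.sub_apply, Finsupp.smul_apply, smul_eq_mul, hrepr, hc,
      Finsupp.single_apply] using this
  have hc0 : ∃ a : Rpoly, c i0 = U + U * V * a := by
    obtain ⟨a, ha⟩ := hc1 i0
    refine ⟨a, ?_⟩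
    rw [if_pos rfl, if_neg e02.symm] at ha
    linear_combination ha
  have hc2 : ∃ a : Rpoly, c i2 = V ^ n + U * V * a := by
    obtain ⟨a, ha⟩ := hc1 i2
    refine ⟨a, ?_⟩
    rw [if_pos rfl, if_neg e02] at ha
    linear_combination ha
  have hcj : ∀ j : ι, j ≠ i0 → j ≠ i2 → U * V ∣ c j := by
    intro j hj0 hj2
    have := hc1 j
    rwa [if_neg (Ne.symm hj0), if_neg (Ne.symm hj2), mul_zero, mul_zero, sub_zero,
      sub_zero] at this
  -- coefficient facts for g
  have hg2 : ∃ a : Rpoly, g i2 = U + U * V * a := by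
    obtain ⟨a, ha⟩ := h2 i3
    refine ⟨a, ?_⟩
    have : g i2 - U = U * V * a := by
      simpa [map_sub, Finsupp.sub_apply, Finsupp.smul_apply, smul_eq_mul, hrepr,
        Finsupp.single_apply, if_neg e23, hg] using ha
    linear_combination this
  have hgj : ∀ j : ι, j ≠ i2 → U * V ∣ g j := by
    intro j hj2
    by_cases hj1 : j = i1
    · rw [hj1]
      obtain ⟨a, ha⟩ := h1 i3
      refine ⟨a, ?_⟩
      simpa [map_sub, Finsupp.sub_apply, Finsupp.smul_apply, smul_eq_mul, hrepr,
        Finsupp.single_apply, if_neg e03, if_neg e23, hg] using ha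
    by_cases hj3 : j = i3
    · rw [hj3]
      obtain ⟨a, ha⟩ := h3 i3
      refine ⟨a, ?_⟩
      simpa [map_sub, Finsupp.sub_apply, Finsupp.smul_apply, smul_eq_mul, hrepr,
        Finsupp.single_apply, if_neg e34.symm, hg] using ha
    exact h6 j hj1 hj2 hj3 i3 (by simp)
  -- every term with j ≠ i2 is divisible by U²V
  have hterm : ∀ j ∈ Finset.univ.erase i2, U * U * V ∣ c j * g j := by
    intro j hj
    have hj2 : j ≠ i2 := Finset.ne_of_mem_erase hj
    obtain ⟨q, hq⟩ := hgj j hj2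
    by_cases hj0 : j = i0
    · subst hj0
      obtain ⟨a, ha⟩ := hc0
      exact ⟨q + V * a * q, by rw [ha, hq]; ring⟩
    · obtain ⟨p, hp⟩ := hcj j hj0 hj2
      exact ⟨V * p * q, by rw [hp, hq]; ring⟩
  have hdvd : U * U * V ∣ c i2 * g i2 := by
    have hsplit : c i2 * g i2 + ∑ j ∈ Finset.univ.erase i2, c j * g j
        = ∑ j, c j * g j := by
      exact Finset.add_sum_erase _ (fun j => c j * g j) (Finset.mem_univ i2)
    have : c i2 * g i2 = -∑ j ∈ Finset.univ.erase i2, c j * g j := by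
      rw [eq_neg_iff_add_eq_zero, hsplit, hsum]
    rw [this]
    exact dvd_neg.mpr (Finset.dvd_sum hterm)
  -- extract the contradiction
  obtain ⟨a2, ha2⟩ := hc2
  obtain ⟨e2, he2⟩ := hg2
  obtain ⟨k, hk⟩ := hdvd
  rw [ha2, he2] at hk
  have hfac : U * ((V ^ n + U * V * a2) * (1 + V * e2)) = U * (U * V * k) := by
    linear_combination hk
  have hUne : U ≠ 0 := X_ne_zero 0
  have hmain : (V ^ n + U * V * a2) * (1 + V * e2) = U * V * k :=
    mul_left_cancel₀ hUne hfac
  -- evaluate at U = 0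
  set φ : Rpoly →ₐ[ZMod 2] Polynomial (ZMod 2) :=
    aeval (fun i : Fin 2 => if i = 0 then 0 else Polynomial.X) with hφ
  have hφU : φ U = 0 := by simp [hφ, hU]
  have hφV : φ V = Polynomial.X := by simp [hφ, hV]
  have heval := congrArg φ hmain
  rw [map_mul, map_mul, map_mul, map_add, map_add, map_mul, map_mul, map_mul, map_pow,
    map_one, hφU, hφV] at heval
  simp only [zero_mul, mul_zero, add_zero] at heval
  -- Xⁿ * (1 + X * φ e2) = 0
  have hXn : (Polynomial.X : Polynomial (ZMod 2)) ^ n ≠ 0 :=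
    pow_ne_zero n Polynomial.X_ne_zero
  have hzero : (1 + Polynomial.X * φ e2 : Polynomial (ZMod 2)) = 0 := by
    rcases mul_eq_zero.mp heval with h | h
    · exact absurd h hXn
    · exact h
  have hco := congrArg (fun p : Polynomial (ZMod 2) => p.coeff 0) hzero
  simp only [Polynomial.coeff_add, Polynomial.coeff_one_zero, Polynomial.mul_coeff_zero,
    Polynomial.coeff_X_zero, zero_mul, add_zero, Polynomial.coeff_zero] at hco
  exact one_ne_zero hco
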